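/- Applying any bang operation to a fractal matrix M_{q,m} (m ≥ 1) yields a matrix that is again, up to permutation of rows and columns, the fractal matrix M_{q,m}; in particular the number of columns does not change, so fractal matrices are non-expandable. -/

import Mathlib

/-- The subcube of `(Z_q)^C` defined by a star pattern `p` (`none` = `*`):
all vectors agreeing with `p` on every coordinate where `p` is numerical. -/
def Subcube {q : ℕ} {C : Type} (p : C → Option (ZMod q)) : Set (C → ZMod q) :=
  {x | ∀ c : C, ∀ a : ZMod q, p c = some a → x c = a}

/-- The number of numerical entries of a star pattern. -/
noncomputable def numCount {q : ℕ} {C : Type} (p : C → Option (ZMod q)) : ℕ :=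
  Nat.card {c : C // (p c).isSome}

/-- The rows of the star matrix `M` define pairwise disjoint subcubes covering the cube. -/
def IsPartitionMatrix (q : ℕ) {R C : Type} (M : R → C → Option (ZMod q)) : Prop :=
  (∀ r r' : R, r ≠ r' → Subcube (M r) ∩ Subcube (M r') = ∅) ∧
  (∀ x : C → ZMod q, ∃ r : R, x ∈ Subcube (M r))

/-- A star matrix is A-primitive if every column has at least one numerical entry. -/
def APrimitive {q : ℕ} {R C : Type} (M : R → C → Option (ZMod q)) : Prop :=
  ∀ c : C, ∃ r : R, (M r c).isSome

/-- Number of rows of the fractal matrix `M_{q,m}`. -/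
def Nrows (q : ℕ) : ℕ → ℕ
  | 0 => 1
  | m + 1 => q * Nrows q m

/-- Number of columns of the fractal matrix `M_{q,m}`. -/
def Ncols (q : ℕ) : ℕ → ℕ
  | 0 => 0
  | m + 1 => 1 + q * Ncols q m

/-- Entry of the fractal matrix `M_{q,m}` in row `r`, column `c` (as natural number
indices): `M_{q,0}` has one row and no columns; `M_{q,m+1}` consists of `q` horizontal
stripes indexed by `a ∈ Z_q`, stripe `a` having the constant value `a` in the first
column, a copy of `M_{q,m}` in the `a`-th of `q` column blocks, and all-stars elsewhere. -/
def fractalEntry (q : ℕ) : ℕ → ℕ → ℕ → Option (ZMod q)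
  | 0, _, _ => none
  | m + 1, r, c =>
    if c = 0 then some (Nat.cast (r / Nrows q m))
    else if (c - 1) / Ncols q m = r / Nrows q m then
      fractalEntry q m (r % Nrows q m) ((c - 1) % Ncols q m)
    else none

/-- The fractal star matrix `M_{q,m}`. -/
def fractalMatrix (q m : ℕ) : Fin (Nrows q m) → Fin (Ncols q m) → Option (ZMod q) :=
  fun r c => fractalEntry q m r.1 c.1

/-- Row index type of the matrix obtained by the bang of `M` at column `i` with value
`a`: rows with a star in column `i` survive, rows with value `a` in column `i` are
replaced by `q` copies, all other rows are deleted. -/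
def BangRow {q : ℕ} {R : Type} {n : ℕ} (M : R → Fin n → Option (ZMod q))
    (i : Fin n) (a : ZMod q) : Type :=
  {r : R // M r i = none} ⊕ ({r : R // M r i = some a} × ZMod q)

/-- Column index type before removing all-star columns: the old columns other than `i`,
together with one new column for every row of `M` having value `a` in column `i`. -/
def BangCol0 {q : ℕ} {R : Type} {n : ℕ} (M : R → Fin n → Option (ZMod q))
    (i : Fin n) (a : ZMod q) : Type :=
  {c : Fin n // c ≠ i} ⊕ {r : R // M r i = some a}

/-- The matrix after the bang, before removing all-star columns: old entries are kept,
and the new column attached to a split row contains each value of `Z_q` exactly once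
within the block of its `q` copies, and stars elsewhere. -/
def bangPre {q : ℕ} {R : Type} [DecidableEq R] {n : ℕ} (M : R → Fin n → Option (ZMod q))
    (i : Fin n) (a : ZMod q) : BangRow M i a → BangCol0 M i a → Option (ZMod q)
  | Sum.inl ⟨r, _⟩, Sum.inl ⟨c, _⟩ => M r c
  | Sum.inl _, Sum.inr _ => none
  | Sum.inr (⟨r, _⟩, _), Sum.inl ⟨c, _⟩ => M r c
  | Sum.inr (⟨r, _⟩, k), Sum.inr ⟨r', _⟩ => if r = r' then some k else none

/-- Columns of the banged matrix: the columns of `bangPre` that are not all-star. -/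
def BangCol {q : ℕ} {R : Type} [DecidableEq R] {n : ℕ} (M : R → Fin n → Option (ZMod q))
    (i : Fin n) (a : ZMod q) : Type :=
  {c : BangCol0 M i a // ∃ ρ : BangRow M i a, (bangPre M i a ρ c).isSome}

/-- The star matrix obtained by the bang of `M` at column `i` with value `a`. -/
def bangMatrix {q : ℕ} {R : Type} [DecidableEq R] {n : ℕ} (M : R → Fin n → Option (ZMod q))
    (i : Fin n) (a : ZMod q) : BangRow M i a → BangCol M i a → Option (ZMod q) :=
  fun ρ c => bangPre M i a ρ c.1


section Aux


section Defs
variable {q : ℕ}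

/-- isomorphism of star matrices up to permutation of rows and columns -/
def MIso {R C R' C' : Type} (M : R → C → Option (ZMod q)) (M' : R' → C' → Option (ZMod q)) : Prop :=
  ∃ (e : R ≃ R') (f : C ≃ C'), ∀ r c, M r c = M' (e r) (f c)

theorem MIso.refl {R C : Type} (M : R → C → Option (ZMod q)) : MIso M M :=
  ⟨Equiv.refl _, Equiv.refl _, fun _ _ => rfl⟩

theorem MIso.symm {R C R' C' : Type} {M : R → C → Option (ZMod q)} {M' : R' → C' → Option (ZMod q)}
    (h : MIso M M') : MIso M' M := by
  obtain ⟨e, f, h⟩ := h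
  exact ⟨e.symm, f.symm, fun r c => by rw [h (e.symm r) (f.symm c), e.apply_symm_apply, f.apply_symm_apply]⟩

theorem MIso.trans {R C R' C' R'' C'' : Type} {M : R → C → Option (ZMod q)}
    {M' : R' → C' → Option (ZMod q)} {M'' : R'' → C'' → Option (ZMod q)}
    (h : MIso M M') (h' : MIso M' M'') : MIso M M'' := by
  obtain ⟨e, f, h⟩ := h; obtain ⟨e', f', h'⟩ := h'
  exact ⟨e.trans e', f.trans f', fun r c => by rw [h, h']; rfl⟩

/-- abstract bang: row type -/
abbrev BRow {R C : Type} (M : R → C → Option (ZMod q)) (i : C) (a : ZMod q) : Type :=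
  {r : R // M r i = none} ⊕ ({r : R // M r i = some a} × ZMod q)

abbrev BCol0 {R C : Type} (M : R → C → Option (ZMod q)) (i : C) (a : ZMod q) : Type :=
  {c : C // c ≠ i} ⊕ {r : R // M r i = some a}

def bpre {R C : Type} [DecidableEq R] (M : R → C → Option (ZMod q)) (i : C) (a : ZMod q) :
    BRow M i a → BCol0 M i a → Option (ZMod q)
  | Sum.inl ⟨r, _⟩, Sum.inl ⟨c, _⟩ => M r c
  | Sum.inl _, Sum.inr _ => none
  | Sum.inr (⟨r, _⟩, _), Sum.inl ⟨c, _⟩ => M r c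
  | Sum.inr (⟨r, _⟩, k), Sum.inr ⟨r', _⟩ => if r = r' then some k else none

abbrev BCol {R C : Type} [DecidableEq R] (M : R → C → Option (ZMod q)) (i : C) (a : ZMod q) : Type :=
  {c : BCol0 M i a // ∃ ρ : BRow M i a, (bpre M i a ρ c).isSome}

def bmat {R C : Type} [DecidableEq R] (M : R → C → Option (ZMod q)) (i : C) (a : ZMod q) :
    BRow M i a → BCol M i a → Option (ZMod q) :=
  fun ρ c => bpre M i a ρ c.1

/-- the stripe construction -/
def stripe {R C : Type} (N : R → C → Option (ZMod q)) :
    (ZMod q × R) → (Unit ⊕ (ZMod q × C)) → Option (ZMod q)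
  | (b, _), Sum.inl _ => some b
  | (b, r), Sum.inr (b', c) => if b' = b then N r c else none

/-- the row-splitting construction -/
def rsplit {R C : Type} [DecidableEq R] (N : R → C → Option (ZMod q)) :
    (R × ZMod q) → (C ⊕ R) → Option (ZMod q)
  | (r, _), Sum.inl c => N r c
  | (r, k), Sum.inr r' => if r = r' then some k else none

end Defs

theorem stripe_congr {R C R' C' : Type} {N : R → C → Option (ZMod q)}
    {N' : R' → C' → Option (ZMod q)} (h : MIso N N') : MIso (stripe N) (stripe N') := by
  obtain ⟨e, f, h⟩ := h
  refine ⟨Equiv.prodCongr (Equiv.refl _) e, Equiv.sumCongr (Equiv.refl _) (Equiv.prodCongr (Equiv.refl _) f), ?_⟩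
  rintro ⟨b, r⟩ (u | ⟨b', c⟩) <;> simp [stripe, h]

theorem rsplit_congr {R C R' C' : Type} [DecidableEq R] [DecidableEq R']
    {N : R → C → Option (ZMod q)}
    {N' : R' → C' → Option (ZMod q)} (h : MIso N N') : MIso (rsplit N) (rsplit N') := by
  obtain ⟨e, f, h⟩ := h
  refine ⟨Equiv.prodCongr e (Equiv.refl _), Equiv.sumCongr f e, ?_⟩
  rintro ⟨r, k⟩ (c | r') <;> simp [rsplit, h]

/-- splitting the rows of a stripe matrix = striping a split matrix -/
theorem rsplit_stripe {R C : Type} [DecidableEq R] (N : R → C → Option (ZMod q)) :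
    MIso (rsplit (stripe N)) (stripe (rsplit N)) := by
  refine ⟨(Equiv.prodAssoc _ _ _), (Equiv.sumAssoc _ _ _).trans
    (Equiv.sumCongr (Equiv.refl Unit) (Equiv.prodSumDistrib (ZMod q) C R).symm), ?_⟩
  rintro ⟨⟨b, r⟩, k⟩ ((u | ⟨b', c⟩) | ⟨b', r'⟩)
  · simp [rsplit, stripe]
  · simp [rsplit, stripe]
  · simp only [rsplit, stripe, Equiv.prodAssoc, Equiv.trans_apply, Equiv.sumAssoc,
      Equiv.sumCongr_apply, Equiv.coe_fn_mk, Equiv.coe_fn_symm_mk]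
    by_cases hb : b' = b <;> by_cases hr : r = r' <;>
      simp_all [stripe, rsplit, Prod.ext_iff, Equiv.prodSumDistrib]
    exact Ne.symm hb

theorem Nrows_pos (q m : ℕ) (hq : 0 < q) : 0 < Nrows q m := by
  induction m with
  | zero => exact Nat.one_pos
  | succ m ih => exact Nat.mul_pos hq ih

/-- row index equivalence -/
def rowSplit (q N : ℕ) (hq : 0 < q) (hN : 0 < N) : Fin (q * N) ≃ ZMod q × Fin N :=
  haveI : NeZero q := ⟨hq.ne'⟩
  { toFun := fun r => (((r : ℕ) / N : ℕ), ⟨(r : ℕ) % N, Nat.mod_lt _ hN⟩)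
    invFun := fun p => ⟨p.1.val * N + p.2.1, by
      have h1 : p.1.val < q := ZMod.val_lt p.1
      have h2 : p.2.1 < N := p.2.2
      calc p.1.val * N + p.2.1 < p.1.val * N + N := by omega
        _ = (p.1.val + 1) * N := by ring
        _ ≤ q * N := Nat.mul_le_mul_right N h1⟩
    left_inv := fun r => by
      have hlt : (r : ℕ) / N < q := Nat.div_lt_of_lt_mul (Nat.mul_comm q N ▸ r.2)
      apply Fin.ext
      simp only [ZMod.val_cast_of_lt hlt]
      rw [Nat.mul_comm]
      exact Nat.div_add_mod (r : ℕ) N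
    right_inv := fun p => by
      have h2 : p.2.1 < N := p.2.2
      have hd : (p.1.val * N + p.2.1) / N = p.1.val := by
        rw [Nat.mul_comm, Nat.mul_add_div hN, Nat.div_eq_of_lt h2]; omega
      have hm : (p.1.val * N + p.2.1) % N = p.2.1 := by
        rw [Nat.mul_comm, Nat.mul_add_mod, Nat.mod_eq_of_lt h2]
      refine Prod.ext ?_ (Fin.ext ?_) <;> simp [hd, hm, ZMod.natCast_zmod_val] }

/-- column index equivalence -/
def colSplit (q N : ℕ) (hq : 0 < q) : Fin (1 + q * N) ≃ Unit ⊕ (ZMod q × Fin N) :=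
  haveI : NeZero q := ⟨hq.ne'⟩
  { toFun := fun c =>
      if h : (c : ℕ) = 0 then Sum.inl ()
      else Sum.inr ((((c : ℕ) - 1) / N : ℕ), ⟨((c : ℕ) - 1) % N, Nat.mod_lt _ (by
        rcases Nat.eq_zero_or_pos N with h0 | h0
        · exfalso; subst h0; have := c.2; omega
        · exact h0)⟩)
    invFun := fun x => match x with
      | Sum.inl _ => ⟨0, by omega⟩
      | Sum.inr (b, s) => ⟨1 + (b.val * N + s.1), by
          have h1 : b.val < q := ZMod.val_lt b
          have h2 : s.1 < N := s.2
          have : b.val * N + s.1 < q * N := by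
            calc b.val * N + s.1 < b.val * N + N := by omega
              _ = (b.val + 1) * N := by ring
              _ ≤ q * N := Nat.mul_le_mul_right N h1
          omega⟩
    left_inv := fun c => by
      by_cases h : (c : ℕ) = 0
      · simp only [h, dif_pos]; exact Fin.ext (by simp [h])
      · have hc1 : 1 ≤ (c : ℕ) := Nat.one_le_iff_ne_zero.mpr h
        have hlt : (c : ℕ) - 1 < q * N := by have := c.2; omega
        have hdiv : ((c : ℕ) - 1) / N < q := Nat.div_lt_of_lt_mul (Nat.mul_comm q N ▸ hlt)
        simp only [dif_neg h]
        apply Fin.ext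
        simp only [ZMod.val_cast_of_lt hdiv]
        have := Nat.div_add_mod ((c : ℕ) - 1) N
        have h3 : ((c : ℕ) - 1) / N * N = N * (((c : ℕ) - 1) / N) := Nat.mul_comm _ _
        omega
    right_inv := fun x => by
      match x with
      | Sum.inl () => simp
      | Sum.inr (b, s) =>
        have h2 : s.1 < N := s.2
        have hne : (1 + (b.val * N + s.1)) ≠ 0 := by omega
        simp only [dif_neg hne]
        have hd : (1 + (b.val * N + s.1) - 1) = b.val * N + s.1 := by omega
        have hN : 0 < N := by omega
        have hdv : (b.val * N + s.1) / N = b.val := by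
          rw [Nat.mul_comm, Nat.mul_add_div hN, Nat.div_eq_of_lt h2]; omega
        have hmd : (b.val * N + s.1) % N = s.1 := by
          rw [Nat.mul_comm, Nat.mul_add_mod, Nat.mod_eq_of_lt h2]
        congr 1
        refine Prod.ext ?_ (Fin.ext ?_)
        · simp [hd, hdv, ZMod.natCast_zmod_val]
        · simp [hd, hmd] }

theorem castNat_inj {q a b : ℕ} (ha : a < q) (hb : b < q) (h : (a : ZMod q) = (b : ZMod q)) :
    a = b := by
  haveI : NeZero q := ⟨by omega⟩
  rw [← ZMod.val_cast_of_lt ha, ← ZMod.val_cast_of_lt hb, h]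

def fracRowEquiv (q m : ℕ) (hq : 0 < q) : Fin (Nrows q (m+1)) ≃ ZMod q × Fin (Nrows q m) :=
  rowSplit q (Nrows q m) hq (Nrows_pos q m hq)

def fracColEquiv (q m : ℕ) (hq : 0 < q) : Fin (Ncols q (m+1)) ≃ Unit ⊕ (ZMod q × Fin (Ncols q m)) :=
  colSplit q (Ncols q m) hq

/-- decomposition of the fractal matrix into stripes -/
theorem fractal_succ (q m : ℕ) (hq : 0 < q) :
    MIso (fractalMatrix q (m + 1)) (stripe (fractalMatrix q m)) := by
  haveI : NeZero q := ⟨hq.ne'⟩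
  have hNr : 0 < Nrows q m := Nrows_pos q m hq
  refine ⟨fracRowEquiv q m hq, fracColEquiv q m hq, ?_⟩
  intro r c
  have hcols : Ncols q (m+1) = 1 + q * Ncols q m := rfl
  have hrows : Nrows q (m+1) = q * Nrows q m := rfl
  have hrw : fracRowEquiv q m hq r
      = ((((r : ℕ) / Nrows q m : ℕ) : ZMod q), ⟨(r : ℕ) % Nrows q m, Nat.mod_lt _ hNr⟩) := rfl
  by_cases h : (c : ℕ) = 0
  · have hc : fracColEquiv q m hq c = Sum.inl () := by
      show (if h : (c : ℕ) = 0 then _ else _) = _; rw [dif_pos h]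
    rw [hc, hrw]
    show fractalEntry q (m+1) r.1 c.1 = _
    simp [fractalEntry, h, stripe]
  · have hc1 : 1 ≤ (c : ℕ) := Nat.one_le_iff_ne_zero.mpr h
    have hlt : (c : ℕ) - 1 < q * Ncols q m := by have h2 := c.2; omega
    have hNc : 0 < Ncols q m := by
      rcases Nat.eq_zero_or_pos (Ncols q m) with h0 | h0
      · rw [h0] at hlt; omega
      · exact h0
    have hdiv : ((c : ℕ) - 1) / Ncols q m < q := Nat.div_lt_of_lt_mul (Nat.mul_comm q _ ▸ hlt)
    have h2r : (r : ℕ) < q * Nrows q m := r.2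
    have hrdiv : (r : ℕ) / Nrows q m < q := Nat.div_lt_of_lt_mul (Nat.mul_comm q _ ▸ h2r)
    have hc : fracColEquiv q m hq c
        = Sum.inr (((((c : ℕ) - 1) / Ncols q m : ℕ) : ZMod q), ⟨((c : ℕ) - 1) % Ncols q m, Nat.mod_lt _ hNc⟩) := by
      show (if h : (c : ℕ) = 0 then _ else _) = _; rw [dif_neg h]
    rw [hc, hrw]
    show fractalEntry q (m+1) r.1 c.1 = _
    simp only [fractalEntry, if_neg h, stripe]
    by_cases he : ((c : ℕ) - 1) / Ncols q m = (r : ℕ) / Nrows q m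
    · rw [if_pos he, if_pos (by rw [he])]
      rfl
    · rw [if_neg he, if_neg (fun hcast => he (castNat_inj hdiv hrdiv hcast))]

theorem rsplit_zero (q : ℕ) :
    MIso (rsplit (fractalMatrix q 0)) (stripe (fractalMatrix q 0)) := by
  refine ⟨Equiv.prodComm _ _, ⟨fun x => match x with
      | Sum.inl c => c.elim0
      | Sum.inr _ => Sum.inl (), fun x => match x with
      | Sum.inl _ => Sum.inr ⟨0, Nat.one_pos⟩
      | Sum.inr (_, c) => c.elim0, fun x => ?_, fun x => ?_⟩, ?_⟩
  · match x with
    | Sum.inl c => exact c.elim0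
    | Sum.inr r => exact congrArg Sum.inr (Fin.ext (by have h2 := r.2; have h1 : Nrows q 0 = 1 := rfl; omega))
  · match x with
    | Sum.inl _ => rfl
    | Sum.inr (_, c) => exact c.elim0
  · rintro ⟨r, k⟩ (c | r')
    · exact c.elim0
    · have : r = r' := Fin.ext (by have h2 := r.2; have h3 := r'.2; have h1 : Nrows q 0 = 1 := rfl; omega)
      simp [rsplit, stripe, this]


end Aux


section BangCongr
variable {q n : ℕ} {R R' C' : Type} [DecidableEq R] [DecidableEq R']
variable {M : R → Fin n → Option (ZMod q)} {M' : R' → C' → Option (ZMod q)}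

def bangRowEquiv (e : R ≃ R') (f : Fin n ≃ C') (h : ∀ r c, M r c = M' (e r) (f c))
    (i : Fin n) (a : ZMod q) : BangRow M i a ≃ BRow M' (f i) a :=
  Equiv.sumCongr (Equiv.subtypeEquiv e (fun r => by rw [h r i]))
    (Equiv.prodCongr (Equiv.subtypeEquiv e (fun r => by rw [h r i])) (Equiv.refl _))

def bangCol0Equiv (e : R ≃ R') (f : Fin n ≃ C') (h : ∀ r c, M r c = M' (e r) (f c))
    (i : Fin n) (a : ZMod q) : BangCol0 M i a ≃ BCol0 M' (f i) a :=
  Equiv.sumCongr (Equiv.subtypeEquiv f (fun c => not_congr ⟨fun hc => by rw [hc], fun hc => f.injective hc⟩))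
    (Equiv.subtypeEquiv e (fun r => by rw [h r i]))

theorem bangPre_congr (e : R ≃ R') (f : Fin n ≃ C') (h : ∀ r c, M r c = M' (e r) (f c))
    (i : Fin n) (a : ZMod q) (ρ : BangRow M i a) (c0 : BangCol0 M i a) :
    bangPre M i a ρ c0 = bpre M' (f i) a (bangRowEquiv e f h i a ρ) (bangCol0Equiv e f h i a c0) := by
  rcases ρ with ⟨r, hr⟩ | ⟨⟨r, hr⟩, k⟩ <;> rcases c0 with ⟨c, hc⟩ | ⟨r', hr'⟩
  · exact h r c
  · rfl
  · exact h r c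
  · show (if r = r' then some k else none) = if e r = e r' then some k else none
    by_cases hrr : r = r'
    · rw [if_pos hrr, if_pos (by rw [hrr])]
    · rw [if_neg hrr, if_neg (fun hh => hrr (e.injective hh))]

theorem bang_congr (e : R ≃ R') (f : Fin n ≃ C') (h : ∀ r c, M r c = M' (e r) (f c))
    (i : Fin n) (a : ZMod q) : MIso (bangMatrix M i a) (bmat M' (f i) a) := by
  refine ⟨bangRowEquiv e f h i a, Equiv.subtypeEquiv (bangCol0Equiv e f h i a) (fun c0 => ?_), fun ρ c => ?_⟩
  · constructor
    · rintro ⟨ρ, hρ⟩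
      exact ⟨bangRowEquiv e f h i a ρ, by rw [← bangPre_congr e f h i a]; exact hρ⟩
    · rintro ⟨ρ', hρ'⟩
      refine ⟨(bangRowEquiv e f h i a).symm ρ', ?_⟩
      rw [bangPre_congr e f h i a, Equiv.apply_symm_apply]
      exact hρ'
  · exact bangPre_congr e f h i a ρ c.1

end BangCongr


section Bang0
variable {q : ℕ} {R C : Type} [DecidableEq R] {N : R → C → Option (ZMod q)}

theorem stripe_inl_eq (b : ZMod q) (r : R) : stripe N (b, r) (Sum.inl ()) = some b := rfl

theorem alive_left {a : ZMod q} {b : ZMod q} {c : C} {hne : (Sum.inr (b, c) : Unit ⊕ ZMod q × C) ≠ Sum.inl ()}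
    (hex : ∃ ρ, (bpre (stripe N) (Sum.inl ()) a ρ
      (Sum.inl ⟨Sum.inr (b, c), hne⟩)).isSome) : b = a := by
  obtain ⟨(⟨⟨b', r⟩, h⟩ | ⟨⟨⟨b', r⟩, h⟩, k⟩), hs⟩ := hex
  · exact absurd h (by simp [stripe])
  · have hb' : b' = a := by simpa [stripe] using h
    show b = a
    by_contra hba
    have : stripe N (b', r) (Sum.inr (b, c)) = none := by
      simp only [stripe]
      rw [if_neg (by rw [hb']; exact fun hh => hba hh)]
    rw [show (bpre (stripe N) (Sum.inl ()) a (Sum.inr (⟨(b', r), h⟩, k))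
      (Sum.inl ⟨Sum.inr (b, c), hne⟩)) = stripe N (b', r) (Sum.inr (b, c)) from rfl, this] at hs
    simp at hs

/-- bang of a stripe matrix at its first column -/
theorem bang_stripe_inl (hAP : ∀ c : C, ∃ r : R, (N r c).isSome) (a : ZMod q) :
    MIso (bmat (stripe N) (Sum.inl ()) a) (rsplit N) := by
  refine ⟨⟨fun x => match x with
      | Sum.inl ⟨⟨b, r⟩, h⟩ => absurd h (by simp [stripe])
      | Sum.inr (⟨⟨b, r⟩, _⟩, k) => (r, k),
    fun p => Sum.inr (⟨(a, p.1), rfl⟩, p.2), ?_, ?_⟩,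
    ⟨fun x => match x with
      | ⟨Sum.inl ⟨Sum.inl (), hne⟩, _⟩ => absurd rfl hne
      | ⟨Sum.inl ⟨Sum.inr (b, c), _⟩, _⟩ => Sum.inl c
      | ⟨Sum.inr ⟨⟨b, r⟩, _⟩, _⟩ => Sum.inr r,
    fun x => match x with
      | Sum.inl c => ⟨Sum.inl ⟨Sum.inr (a, c), by simp⟩, by
          obtain ⟨r, hr⟩ := hAP c
          refine ⟨Sum.inr (⟨(a, r), rfl⟩, 0), ?_⟩
          show (stripe N (a, r) (Sum.inr (a, c))).isSome
          simpa [stripe] using hr⟩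
      | Sum.inr r => ⟨Sum.inr ⟨(a, r), rfl⟩, ⟨Sum.inr (⟨(a, r), rfl⟩, 0), by
          show (if (a, r) = (a, r) then some (0 : ZMod q) else none).isSome
          simp⟩⟩, ?_, ?_⟩, ?_⟩
  · rintro (⟨⟨b, r⟩, h⟩ | ⟨⟨⟨b, r⟩, h⟩, k⟩)
    · exact absurd h (by simp [stripe])
    · have hb : b = a := by simpa [stripe] using h
      subst hb
      rfl
  · rintro ⟨r, k⟩
    rfl
  · rintro ⟨(⟨(x | ⟨b, c⟩), hne⟩ | ⟨⟨b, r⟩, h⟩), hex⟩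
    · exact absurd rfl hne
    · have hb : b = a := alive_left hex
      subst hb
      rfl
    · have hb : b = a := by simpa [stripe] using h
      subst hb
      rfl
  · rintro (c | r) <;> rfl
  · rintro (⟨⟨b, r⟩, h⟩ | ⟨⟨⟨b, r⟩, h⟩, k⟩) ⟨(⟨(x | ⟨b', c⟩), hne⟩ | ⟨⟨b', r'⟩, h'⟩), hex⟩
    · exact absurd h (by simp [stripe])
    · exact absurd h (by simp [stripe])
    · exact absurd h (by simp [stripe])
    · exact absurd rfl hne
    · have hb : b = a := by simpa [stripe] using h
      have hb' : b' = a := alive_left hex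
      show stripe N (b, r) (Sum.inr (b', c)) = N r c
      simp only [stripe]
      rw [if_pos (hb'.trans hb.symm)]
    · have hb : b = a := by simpa [stripe] using h
      have hb' : b' = a := by simpa [stripe] using h'
      show (if (b, r) = (b', r') then some k else none) = if r = r' then some k else none
      by_cases hrr : r = r'
      · rw [if_pos (by rw [hrr, hb, hb']), if_pos hrr]
      · rw [if_neg (by simp [Prod.ext_iff, hrr]), if_neg hrr]

end Bang0


section BangInr

/-- glueing a distinguished block into a stripe-indexed family -/
def stripeGlue {q : ℕ} (b0 : ZMod q) {A B T : Type} (e1 : A ≃ T) (e2 : B ≃ T) :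
    (({b : ZMod q // b ≠ b0} × A) ⊕ B) ≃ ZMod q × T where
  toFun x := match x with
    | Sum.inl (⟨b, _⟩, x) => (b, e1 x)
    | Sum.inr y => (b0, e2 y)
  invFun p := if hb : p.1 = b0 then Sum.inr (e2.symm p.2) else Sum.inl (⟨p.1, hb⟩, e1.symm p.2)
  left_inv x := by
    match x with
    | Sum.inl (⟨b, hb⟩, x) => simp [dif_neg hb]
    | Sum.inr y => simp
  right_inv p := by
    rcases p with ⟨b, t⟩
    by_cases hb : b = b0
    · subst hb; simp
    · simp [dif_neg hb]

variable {q n : ℕ} {R : Type} [DecidableEq R] {N : R → Fin n → Option (ZMod q)}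
  {b0 : ZMod q} {j : Fin n} {a : ZMod q}

theorem stripe_inr_none {b : ZMod q} {r : R}
    (h : stripe N (b, r) (Sum.inr (b0, j)) = none) (hb : b = b0) : N r j = none := by
  subst hb
  simpa [stripe] using h

theorem stripe_inr_some {b : ZMod q} {r : R}
    (h : stripe N (b, r) (Sum.inr (b0, j)) = some a) : b = b0 ∧ N r j = some a := by
  by_cases hb : b0 = b
  · subst hb
    constructor
    · rfl
    · simpa [stripe] using h
  · exfalso
    simp only [stripe] at h
    rw [if_neg hb] at h
    cases h

/-- restructuring the rows of a banged stripe matrix -/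
def bangRowInr : BRow (stripe N) (Sum.inr (b0, j)) a ≃ (({b : ZMod q // b ≠ b0} × R) ⊕ BangRow N j a) where
  toFun x := match x with
    | Sum.inl ⟨(b, r), h⟩ =>
        if hb : b = b0 then Sum.inr (Sum.inl ⟨r, stripe_inr_none h hb⟩)
        else Sum.inl (⟨b, hb⟩, r)
    | Sum.inr (⟨(b, r), h⟩, k) => Sum.inr (Sum.inr (⟨r, (stripe_inr_some h).2⟩, k))
  invFun x := match x with
    | Sum.inl (⟨b, hb⟩, r) => Sum.inl ⟨(b, r), by
        simp only [stripe]; rw [if_neg (fun h => hb h.symm)]⟩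
    | Sum.inr (Sum.inl ⟨r, hr⟩) => Sum.inl ⟨(b0, r), by simp [stripe, hr]⟩
    | Sum.inr (Sum.inr (⟨r, hr⟩, k)) => Sum.inr (⟨(b0, r), by simp [stripe, hr]⟩, k)
  left_inv x := by
    match x with
    | Sum.inl ⟨(b, r), h⟩ =>
      by_cases hb : b = b0
      · subst hb; simp
      · simp only [dif_neg hb]
    | Sum.inr (⟨(b, r), h⟩, k) =>
      have hb := (stripe_inr_some h).1
      subst hb
      rfl
  right_inv x := by
    match x with
    | Sum.inl (⟨b, hb⟩, r) => simp only [dif_neg hb]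
    | Sum.inr (Sum.inl ⟨r, hr⟩) => simp
    | Sum.inr (Sum.inr (⟨r, hr⟩, k)) => rfl

theorem surv_block {c : Fin n} (hne : (Sum.inr (b0, c) : Unit ⊕ ZMod q × Fin n) ≠ Sum.inr (b0, j))
    (hex : ∃ ρ, (bpre (stripe N) (Sum.inr (b0, j)) a ρ (Sum.inl ⟨Sum.inr (b0, c), hne⟩)).isSome)
    (hcj : c ≠ j) : ∃ ρi : BangRow N j a, (bangPre N j a ρi (Sum.inl ⟨c, hcj⟩)).isSome := by
  obtain ⟨(⟨⟨b', r⟩, h⟩ | ⟨⟨⟨b', r⟩, h⟩, k⟩), hs⟩ := hex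
  · have hv : (stripe N (b', r) (Sum.inr (b0, c))).isSome := hs
    by_cases hb : b' = b0
    · subst hb
      refine ⟨Sum.inl ⟨r, stripe_inr_none h rfl⟩, ?_⟩
      show (N r c).isSome
      simpa [stripe] using hv
    · exfalso
      rw [show stripe N (b', r) (Sum.inr (b0, c)) = none from by
        simp only [stripe]; rw [if_neg (fun hh => hb hh.symm)]] at hv
      simp at hv
  · have hv : (stripe N (b', r) (Sum.inr (b0, c))).isSome := hs
    obtain ⟨hb, ha⟩ := stripe_inr_some h
    subst hb
    refine ⟨Sum.inr (⟨r, ha⟩, k), ?_⟩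
    show (N r c).isSome
    simpa [stripe] using hv

theorem cj_ne {b : ZMod q} {c : Fin n} (hne : (Sum.inr (b, c) : Unit ⊕ ZMod q × Fin n) ≠ Sum.inr (b0, j))
    (hb : b = b0) : c ≠ j := by
  intro hcj
  exact hne (by rw [hb, hcj])

/-- restructuring the surviving columns of a banged stripe matrix;
    `hq`, `hne`, `hAP` are needed to show that the first column and the
    untouched-block columns survive -/
def bangColInr (hq : 2 ≤ q) (hne : Nonempty R) (hAP : ∀ c : Fin n, ∃ r : R, (N r c).isSome) :
    BCol (stripe N) (Sum.inr (b0, j)) a ≃ (Unit ⊕ (({b : ZMod q // b ≠ b0} × Fin n) ⊕ BangCol N j a)) := by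
  haveI : Fact (1 < q) := ⟨hq⟩
  have hb01 : (b0 + 1 : ZMod q) ≠ b0 := by
    intro h
    have : (1 : ZMod q) = 0 := by
      have := congrArg (fun x => x - b0) h
      simpa using this
    exact one_ne_zero this
  exact {
    toFun := fun x => match x with
      | ⟨Sum.inl ⟨Sum.inl (), _⟩, _⟩ => Sum.inl ()
      | ⟨Sum.inl ⟨Sum.inr (b, c), hne'⟩, hex⟩ =>
          if hb : b = b0 then
            Sum.inr (Sum.inr ⟨Sum.inl ⟨c, cj_ne hne' hb⟩, by
              subst hb; exact surv_block hne' hex (cj_ne hne' rfl)⟩)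
          else Sum.inr (Sum.inl (⟨b, hb⟩, c))
      | ⟨Sum.inr ⟨(b, r), h⟩, _⟩ =>
          Sum.inr (Sum.inr ⟨Sum.inr ⟨r, (stripe_inr_some h).2⟩, ⟨Sum.inr (⟨r, (stripe_inr_some h).2⟩, 0), by
            show (if r = r then some (0 : ZMod q) else none).isSome
            simp⟩⟩)
    invFun := fun y => match y with
      | Sum.inl () => ⟨Sum.inl ⟨Sum.inl (), by simp⟩, by
          obtain ⟨r0⟩ := hne
          refine ⟨Sum.inl ⟨(b0 + 1, r0), ?_⟩, ?_⟩
          · simp only [stripe]; rw [if_neg (fun hh => hb01 hh.symm)]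
          · show (stripe N (b0 + 1, r0) (Sum.inl ())).isSome
            simp [stripe]⟩
      | Sum.inr (Sum.inl (⟨b, hb⟩, c)) => ⟨Sum.inl ⟨Sum.inr (b, c), by
            simp only [ne_eq, Sum.inr.injEq, Prod.mk.injEq, not_and]
            exact fun h => absurd h hb⟩, by
          obtain ⟨r, hr⟩ := hAP c
          refine ⟨Sum.inl ⟨(b, r), by simp only [stripe]; rw [if_neg (fun hh => hb hh.symm)]⟩, ?_⟩
          show (stripe N (b, r) (Sum.inr (b, c))).isSome
          simpa [stripe] using hr⟩
      | Sum.inr (Sum.inr ⟨Sum.inl ⟨c, hcj⟩, hexi⟩) => ⟨Sum.inl ⟨Sum.inr (b0, c), by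
            simp only [ne_eq, Sum.inr.injEq, Prod.mk.injEq, not_and]
            exact fun _ h => hcj h⟩, by
          obtain ⟨(⟨r, hrn⟩ | ⟨⟨r, hra⟩, k⟩), hsi⟩ := hexi
          · refine ⟨Sum.inl ⟨(b0, r), by simp [stripe, hrn]⟩, ?_⟩
            show (stripe N (b0, r) (Sum.inr (b0, c))).isSome
            have : (N r c).isSome := hsi
            simpa [stripe] using this
          · refine ⟨Sum.inr (⟨(b0, r), by simp [stripe, hra]⟩, k), ?_⟩
            show (stripe N (b0, r) (Sum.inr (b0, c))).isSome
            have : (N r c).isSome := hsi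
            simpa [stripe] using this⟩
      | Sum.inr (Sum.inr ⟨Sum.inr ⟨r, hra⟩, _⟩) => ⟨Sum.inr ⟨(b0, r), by simp [stripe, hra]⟩,
          ⟨Sum.inr (⟨(b0, r), by simp [stripe, hra]⟩, 0), by
            show (if (b0, r) = (b0, r) then some (0 : ZMod q) else none).isSome
            simp⟩⟩
    left_inv := fun x => by
      match x with
      | ⟨Sum.inl ⟨Sum.inl (), hne'⟩, hex⟩ => rfl
      | ⟨Sum.inl ⟨Sum.inr (b, c), hne'⟩, hex⟩ =>
        by_cases hb : b = b0
        · subst hb; simp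
        · simp [dif_neg hb]
      | ⟨Sum.inr ⟨(b, r), h⟩, hex⟩ =>
        have hb := (stripe_inr_some h).1
        subst hb
        rfl
    right_inv := fun y => by
      match y with
      | Sum.inl () => rfl
      | Sum.inr (Sum.inl (⟨b, hb⟩, c)) => simp [dif_neg hb]
      | Sum.inr (Sum.inr ⟨Sum.inl ⟨c, hcj⟩, hexi⟩) => simp [dif_pos rfl]
      | Sum.inr (Sum.inr ⟨Sum.inr ⟨r, hra⟩, hexi⟩) => rfl }

theorem bang_stripe_inr {RP CP : Type} (hq : 2 ≤ q) (hne : Nonempty R)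
    (hAP : ∀ c : Fin n, ∃ r : R, (N r c).isSome) {P : RP → CP → Option (ZMod q)}
    (h1 : MIso N P) (h2 : MIso (bangMatrix N j a) P) :
    MIso (bmat (stripe N) (Sum.inr (b0, j)) a) (stripe P) := by
  obtain ⟨e1, f1, H1⟩ := h1
  obtain ⟨e2, f2, H2⟩ := h2
  refine ⟨bangRowInr.trans (stripeGlue b0 e1 e2),
    (bangColInr hq hne hAP).trans (Equiv.sumCongr (Equiv.refl Unit) (stripeGlue b0 f1 f2)), ?_⟩
  rintro (⟨⟨b, r⟩, h⟩ | ⟨⟨⟨b, r⟩, h⟩, k⟩) ⟨x, hex⟩ <;>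
    rcases x with ⟨u | ⟨b', c⟩, hne'⟩ | ⟨⟨b'', r'⟩, h'⟩ <;>
    simp only [Equiv.trans_apply]
  · by_cases hb : b = b0 <;>
      simp [bangRowInr, bangColInr, stripeGlue, stripe, bmat, bpre, hb]
  · by_cases hb : b = b0 <;> by_cases hb' : b' = b0 <;>
      simp [bangRowInr, bangColInr, stripeGlue, bmat, bpre, stripe, hb, hb',
        ← H1, ← H2, bangMatrix, bangPre] <;>
      try rw [if_neg (fun hh : b0 = b => hb hh.symm), if_neg (fun hh : b0 = b => hb hh.symm)]
    refine Eq.trans ?_ (H2 _ _); rfl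
  · by_cases hb : b = b0 <;>
      simp [bangRowInr, bangColInr, stripeGlue, bmat, bpre, stripe, hb,
        ← H1, ← H2, bangMatrix, bangPre] <;>
      try rw [if_neg (fun hh : b0 = b => hb hh.symm)]
    · refine Eq.trans ?_ (H2 _ _); rfl
    · intro hh; exact absurd hh.symm hb
  · have hb := (stripe_inr_some h).1
    simp [bangRowInr, bangColInr, stripeGlue, bmat, bpre, stripe, hb,
      ← H1, ← H2, bangMatrix, bangPre]
  · have hb := (stripe_inr_some h).1
    by_cases hb' : b' = b0 <;>
      simp [bangRowInr, bangColInr, stripeGlue, bmat, bpre, stripe, hb, hb',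
        ← H1, ← H2, bangMatrix, bangPre]
    refine Eq.trans ?_ (H2 _ _); rfl
  · have hb := (stripe_inr_some h).1
    have hb'' := (stripe_inr_some h').1
    simp [bangRowInr, bangColInr, stripeGlue, bmat, bpre, stripe, hb, hb'', Prod.ext_iff,
      ← H1, ← H2, bangMatrix, bangPre]
    refine Eq.trans ?_ (H2 _ _); rfl

end BangInr


section Final
variable {q : ℕ}

theorem AP_of_iso {R C R' C' : Type} {M : R → C → Option (ZMod q)} {M' : R' → C' → Option (ZMod q)}
    (h : MIso M M') (hAP : ∀ c' : C', ∃ r' : R', (M' r' c').isSome) :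
    ∀ c : C, ∃ r : R, (M r c).isSome := by
  obtain ⟨e, f, H⟩ := h
  intro c
  obtain ⟨r', hs⟩ := hAP (f c)
  refine ⟨e.symm r', ?_⟩
  rw [H (e.symm r') c, e.apply_symm_apply]
  exact hs

theorem AP_stripe {R C : Type} {N : R → C → Option (ZMod q)} (hne : Nonempty R)
    (hAP : ∀ c : C, ∃ r : R, (N r c).isSome) :
    ∀ c : Unit ⊕ ZMod q × C, ∃ ρ : ZMod q × R, (stripe N ρ c).isSome := by
  obtain ⟨r0⟩ := hne
  rintro (u | ⟨b, c⟩)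
  · exact ⟨((0 : ZMod q), r0), by simp [stripe]⟩
  · obtain ⟨r, hr⟩ := hAP c
    exact ⟨(b, r), by simpa [stripe] using hr⟩

theorem fractal_AP (q m : ℕ) (hq : 0 < q) :
    ∀ c : Fin (Ncols q m), ∃ r : Fin (Nrows q m), ((fractalMatrix q m) r c).isSome := by
  induction m with
  | zero => exact fun c => absurd c.2 (by simp [Ncols])
  | succ m ih =>
    refine AP_of_iso (fractal_succ q m hq) (AP_stripe ?_ ih)
    have := Nrows_pos q m hq
    exact ⟨⟨0, this⟩⟩

theorem rsplit_fractal (q m : ℕ) (hq : 0 < q) :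
    MIso (rsplit (fractalMatrix q m)) (fractalMatrix q (m + 1)) := by
  induction m with
  | zero => exact (rsplit_zero q).trans (fractal_succ q 0 hq).symm
  | succ m ih =>
    exact (((rsplit_congr (fractal_succ q m hq)).trans
      (rsplit_stripe (fractalMatrix q m))).trans (stripe_congr ih)).trans
      (fractal_succ q (m + 1) hq).symm

theorem bang_fractal (q : ℕ) (hq : 2 ≤ q) : ∀ (m : ℕ) (i : Fin (Ncols q (m + 1))) (a : ZMod q),
    MIso (bangMatrix (fractalMatrix q (m + 1)) i a) (fractalMatrix q (m + 1)) := by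
  have hq0 : 0 < q := by omega
  intro m
  induction m with
  | zero =>
    intro i a
    obtain ⟨e, f, H⟩ := fractal_succ q 0 hq0
    refine (bang_congr e f H i a).trans ?_
    rcases hfi : f i with ⟨⟩ | ⟨b, c⟩
    · exact (bang_stripe_inl (fractal_AP q 0 hq0) a).trans (rsplit_fractal q 0 hq0)
    · exact absurd c.2 (by simp [Ncols])
  | succ m ih =>
    intro i a
    obtain ⟨e, f, H⟩ := fractal_succ q (m + 1) hq0
    refine (bang_congr e f H i a).trans ?_
    rcases hfi : f i with ⟨⟩ | ⟨b, j⟩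
    · exact (bang_stripe_inl (fractal_AP q (m + 1) hq0) a).trans (rsplit_fractal q (m + 1) hq0)
    · have hne : Nonempty (Fin (Nrows q (m + 1))) := ⟨⟨0, Nrows_pos q (m + 1) hq0⟩⟩
      exact (bang_stripe_inr hq hne (fractal_AP q (m + 1) hq0) (MIso.refl _) (ih j a)).trans
        (fractal_succ q (m + 1) hq0).symm

end Final

/-- Any bang of the fractal matrix `M_{q,m}` (`m ≥ 1`) yields, up to permutation of rows
and columns, again the fractal matrix `M_{q,m}`; in particular the number of columns does
not change, so fractal matrices are non-expandable. -/
theorem stmt16 (q m : ℕ) (hq : 2 ≤ q) (hm : 1 ≤ m)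
    (i : Fin (Ncols q m)) (a : ZMod q) :
    Nat.card (BangCol (fractalMatrix q m) i a) = Ncols q m ∧
    ∃ (e : BangRow (fractalMatrix q m) i a ≃ Fin (Nrows q m))
      (f : BangCol (fractalMatrix q m) i a ≃ Fin (Ncols q m)),
      ∀ ρ c, bangMatrix (fractalMatrix q m) i a ρ c = fractalMatrix q m (e ρ) (f c) := by
  obtain ⟨m', rfl⟩ : ∃ m', m = m' + 1 := ⟨m - 1, by omega⟩
  obtain ⟨e, f, H⟩ := bang_fractal q hq m' i a
  exact ⟨by rw [Nat.card_congr f]; simp, e, f, H⟩
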